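/- Let (Θ, σ) be a probability space and (A, λ) a finite measure space. Let 𝒫(θ, A') be a predicate, with θ ∈ Θ and A' a measurable subset of A, which is decreasingly monotone in A': if 𝒫(θ, A') holds and A'' ⊆ A' is measurable, then 𝒫(θ, A'') holds. For a measurable A' ⊆ A and ρ ∈ (0, 1/16), let ℰ^𝒫(A', ρ) := { θ ∈ Θ : ∃ measurable A'' ⊆ A' with λ(A'') ≥ ρ·λ(A') and 𝒫(θ, A'') }. Let (S_i)_{i ∈ I} be a finite family of pairwise disjoint measurable subsets of A whose union S := ⋃_{i ∈ I} S_i satisfies λ(S) > 0 and is contained in a measurable set A' ⊆ A with λ(A' ∖ S) ≤ ρ^{3/2}·λ(A'). Assume each set ℰ^𝒫(S_i, ρ^{3/2}) is σ-measurable. Then the σ-outer measure of ℰ^𝒫(A', ρ) is at most 2·ρ^{-1}·sup_{i ∈ I} σ(ℰ^𝒫(S_i, ρ^{3/2})). -/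

import Mathlib

open MeasureTheory

/-- **Lemma A.5 (lm:exhaustion).**
Let `(Θ, σ)` be a probability space and `(α, lam)` a finite measure space.  Let `P θ A'` be a
predicate, monotone decreasing in the measurable set `A'`, and write
`E A' r = {θ : ∃ measurable A'' ⊆ A', lam A'' ≥ r·lam A' ∧ P θ A''}`.
If `(S i)_{i ∈ I}` is a finite family of pairwise disjoint measurable sets whose union `S`
has positive measure and is contained in a measurable `A'` with
`lam (A' \ S) ≤ ρ^{3/2}·lam A'`, and each `E (S i) (ρ^{3/2})` is measurable, then
`σ*(E A' ρ) ≤ 2 ρ⁻¹ · sup_{i ∈ I} σ (E (S i) (ρ^{3/2}))`. -/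
theorem stmt_15 {Θ α ι : Type*} [MeasurableSpace Θ] [MeasurableSpace α]
    (σ : Measure Θ) [IsProbabilityMeasure σ]
    (lam : Measure α) [IsFiniteMeasure lam]
    (P : Θ → Set α → Prop)
    (hmono : ∀ (θ : Θ) (A' A'' : Set α), MeasurableSet A' → MeasurableSet A'' →
      A'' ⊆ A' → P θ A' → P θ A'')
    (E : Set α → ℝ → Set Θ)
    (hE : ∀ (A' : Set α) (r : ℝ), E A' r =
      {θ : Θ | ∃ A'' : Set α, MeasurableSet A'' ∧ A'' ⊆ A' ∧
        ENNReal.ofReal r * lam A' ≤ lam A'' ∧ P θ A''})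
    (ρ : ℝ) (hρ0 : 0 < ρ) (hρ : ρ < 1 / 16)
    (I : Finset ι) (S : ι → Set α)
    (hSmeas : ∀ i ∈ I, MeasurableSet (S i))
    (hdisj : ∀ i ∈ I, ∀ j ∈ I, i ≠ j → Disjoint (S i) (S j))
    (A' : Set α) (hA'meas : MeasurableSet A')
    (hSA' : (⋃ i ∈ I, S i) ⊆ A')
    (hSpos : 0 < lam (⋃ i ∈ I, S i))
    (hsmall : lam (A' \ ⋃ i ∈ I, S i) ≤ ENNReal.ofReal (ρ ^ ((3 : ℝ) / 2)) * lam A')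
    (hEmeas : ∀ i ∈ I, MeasurableSet (E (S i) (ρ ^ ((3 : ℝ) / 2)))) :
    σ (E A' ρ) ≤ ENNReal.ofReal (2 / ρ) * ⨆ i ∈ I, σ (E (S i) (ρ ^ ((3 : ℝ) / 2))) := by
  
  set r := ρ ^ ((3 : ℝ) / 2) with hrdef
  have hr0 : 0 < r := Real.rpow_pos_of_pos hρ0 _
  have hrρ : r ≤ ρ / 4 := by
    have hsq : Real.sqrt ρ ≤ 1 / 4 := by
      rw [show (1 / 4 : ℝ) = Real.sqrt (1 / 16) by
        rw [show (1 / 16 : ℝ) = (1 / 4) ^ 2 by norm_num, Real.sqrt_sq (by norm_num)]]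
      exact Real.sqrt_le_sqrt hρ.le
    have hreq : r = ρ * Real.sqrt ρ := by
      rw [hrdef, Real.sqrt_eq_rpow, show (3 : ℝ) / 2 = 1 + 1 / 2 by norm_num,
        Real.rpow_add hρ0, Real.rpow_one]
    nlinarith [hsq, hρ0, Real.sqrt_nonneg ρ]
  set L := lam A' with hL
  have hLpos : 0 < L := lt_of_lt_of_le hSpos (measure_mono hSA')
  have hLtop : L ≠ ⊤ := measure_ne_top _ _
  set c : ENNReal := ENNReal.ofReal (ρ / 2) * L with hc
  have hc0 : c ≠ 0 := by
    apply mul_ne_zero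
    · exact (ENNReal.ofReal_pos.mpr (by linarith)).ne'
    · exact hLpos.ne'
  have hctop : c ≠ ⊤ := ENNReal.mul_ne_top ENNReal.ofReal_ne_top hLtop
  set g : Θ → ENNReal := fun θ => ∑ i ∈ I, (E (S i) r).indicator (fun _ => lam (S i)) θ with hg
  set B := ⨆ i ∈ I, σ (E (S i) r) with hB
  -- Step 1: E A' ρ ⊆ {θ | c ≤ g θ}
  have hsub : E A' ρ ⊆ {θ | c ≤ g θ} := by
    intro θ hθ
    rw [hE] at hθ
    obtain ⟨A'', hA''m, hA''s, hA''lam, hP⟩ := hθ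
    set good := I.filter (fun i => ENNReal.ofReal r * lam (S i) ≤ lam (A'' ∩ S i)) with hgood
    have hmem : ∀ i ∈ good, θ ∈ E (S i) r := by
      intro i hi
      rw [Finset.mem_filter] at hi
      rw [hE]
      exact ⟨A'' ∩ S i, hA''m.inter (hSmeas i hi.1), Set.inter_subset_right, hi.2,
        hmono θ A'' (A'' ∩ S i) hA''m (hA''m.inter (hSmeas i hi.1)) Set.inter_subset_left hP⟩
    have hunion : A'' ∩ ⋃ i ∈ I, S i = ⋃ i ∈ I, A'' ∩ S i := by
      simp [Set.inter_iUnion]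
    have hpd : (↑I : Set ι).PairwiseDisjoint (fun i => A'' ∩ S i) := by
      intro i hi j hj hij
      exact (hdisj i hi j hj hij).mono Set.inter_subset_right Set.inter_subset_right
    have hsum : lam (A'' ∩ ⋃ i ∈ I, S i) = ∑ i ∈ I, lam (A'' ∩ S i) := by
      rw [hunion]
      exact measure_biUnion_finset hpd (fun i hi => hA''m.inter (hSmeas i hi))
    have hdiff : lam (A'' \ ⋃ i ∈ I, S i) ≤ ENNReal.ofReal r * L :=
      le_trans (measure_mono (Set.diff_subset_diff_left hA''s)) hsmall
    have hSle : lam (⋃ i ∈ I, S i) ≤ L := measure_mono hSA'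
    have hbad : ∑ i ∈ I.filter (fun i => ¬ (ENNReal.ofReal r * lam (S i) ≤ lam (A'' ∩ S i))),
        lam (A'' ∩ S i) ≤ ENNReal.ofReal r * L := by
      calc ∑ i ∈ I.filter (fun i => ¬ (ENNReal.ofReal r * lam (S i) ≤ lam (A'' ∩ S i))),
            lam (A'' ∩ S i)
          ≤ ∑ i ∈ I.filter (fun i => ¬ (ENNReal.ofReal r * lam (S i) ≤ lam (A'' ∩ S i))),
            ENNReal.ofReal r * lam (S i) :=
            Finset.sum_le_sum fun i hi => (not_le.mp (Finset.mem_filter.mp hi).2).le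
        _ ≤ ∑ i ∈ I, ENNReal.ofReal r * lam (S i) :=
            Finset.sum_le_sum_of_subset (Finset.filter_subset _ _)
        _ = ENNReal.ofReal r * ∑ i ∈ I, lam (S i) := (Finset.mul_sum _ _ _).symm
        _ = ENNReal.ofReal r * lam (⋃ i ∈ I, S i) := by
            rw [measure_biUnion_finset (fun i hi j hj hij => hdisj i hi j hj hij) hSmeas]
        _ ≤ ENNReal.ofReal r * L := mul_le_mul_right hSle _
    have hgoodle : ∑ i ∈ good, lam (A'' ∩ S i) ≤ g θ := by
      calc ∑ i ∈ good, lam (A'' ∩ S i)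
          ≤ ∑ i ∈ good, lam (S i) :=
            Finset.sum_le_sum fun i _ => measure_mono Set.inter_subset_right
        _ = ∑ i ∈ good, (E (S i) r).indicator (fun _ => lam (S i)) θ :=
            Finset.sum_congr rfl fun i hi => (Set.indicator_of_mem (hmem i hi) (fun _ => lam (S i))).symm
        _ ≤ g θ := Finset.sum_le_sum_of_subset (Finset.filter_subset _ _)
    have hchain : ENNReal.ofReal ρ * L ≤ g θ + (ENNReal.ofReal r * L + ENNReal.ofReal r * L) := by
      calc ENNReal.ofReal ρ * L ≤ lam A'' := hA''lam
        _ = lam (A'' ∩ ⋃ i ∈ I, S i) + lam (A'' \ ⋃ i ∈ I, S i) :=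
            (measure_inter_add_diff _ (MeasurableSet.biUnion I.countable_toSet
              (fun i hi => hSmeas i hi))).symm
        _ = (∑ i ∈ good, lam (A'' ∩ S i) +
              ∑ i ∈ I.filter (fun i => ¬ (ENNReal.ofReal r * lam (S i) ≤ lam (A'' ∩ S i))),
                lam (A'' ∩ S i)) + lam (A'' \ ⋃ i ∈ I, S i) := by
            rw [hsum, Finset.sum_filter_add_sum_filter_not]
        _ ≤ (g θ + ENNReal.ofReal r * L) + ENNReal.ofReal r * L := by
            exact add_le_add (add_le_add hgoodle hbad) hdiff
        _ = g θ + (ENNReal.ofReal r * L + ENNReal.ofReal r * L) := by ring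
    have h2r : ENNReal.ofReal r * L + ENNReal.ofReal r * L ≤ c := by
      rw [hc, ← add_mul, ← ENNReal.ofReal_add hr0.le hr0.le]
      exact mul_le_mul_left (ENNReal.ofReal_le_ofReal (by linarith)) _
    have hcc : c + c ≤ g θ + c := by
      calc c + c = ENNReal.ofReal ρ * L := by
            rw [hc, ← add_mul, ← ENNReal.ofReal_add (by linarith) (by linarith)]
            norm_num
        _ ≤ g θ + (ENNReal.ofReal r * L + ENNReal.ofReal r * L) := hchain
        _ ≤ g θ + c := add_le_add_right h2r _
    exact (ENNReal.add_le_add_iff_right hctop).mp hcc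
  -- Step 2: Chebyshev
  have hgmeas : Measurable g :=
    Finset.measurable_sum _ fun i hi => measurable_const.indicator (hEmeas i hi)
  have hmarkov : c * σ {θ | c ≤ g θ} ≤ ∫⁻ θ, g θ ∂σ :=
    mul_meas_ge_le_lintegral₀ hgmeas.aemeasurable c
  have hlint : ∫⁻ θ, g θ ∂σ = ∑ i ∈ I, lam (S i) * σ (E (S i) r) := by
    rw [hg]
    rw [lintegral_finset_sum _ (fun i hi => measurable_const.indicator (hEmeas i hi))]
    exact Finset.sum_congr rfl fun i hi => by
      rw [lintegral_indicator_const (hEmeas i hi)]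
  have hsumB : ∑ i ∈ I, lam (S i) * σ (E (S i) r) ≤ L * B := by
    calc ∑ i ∈ I, lam (S i) * σ (E (S i) r)
        ≤ ∑ i ∈ I, lam (S i) * B := by
          refine Finset.sum_le_sum fun i hi => mul_le_mul_right ?_ _
          rw [hB]
          exact le_biSup (fun i => σ (E (S i) r)) hi
      _ = (∑ i ∈ I, lam (S i)) * B := (Finset.sum_mul _ _ _).symm
      _ ≤ L * B := by
          apply mul_le_mul_left
          rw [← measure_biUnion_finset (fun i hi j hj hij => hdisj i hi j hj hij) hSmeas]
          exact measure_mono hSA'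
  have hone : ENNReal.ofReal (ρ / 2) * ENNReal.ofReal (2 / ρ) = 1 := by
    rw [← ENNReal.ofReal_mul (by positivity), show (ρ / 2) * (2 / ρ) = 1 by field_simp]
    exact ENNReal.ofReal_one
  rw [← ENNReal.mul_le_mul_iff_right hc0 hctop]
  calc c * σ (E A' ρ) ≤ c * σ {θ | c ≤ g θ} := mul_le_mul_right (measure_mono hsub) _
    _ ≤ ∫⁻ θ, g θ ∂σ := hmarkov
    _ = ∑ i ∈ I, lam (S i) * σ (E (S i) r) := hlint
    _ ≤ L * B := hsumB
    _ = c * (ENNReal.ofReal (2 / ρ) * B) := by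
        rw [hc, show ENNReal.ofReal (ρ / 2) * L * (ENNReal.ofReal (2 / ρ) * B)
          = (ENNReal.ofReal (ρ / 2) * ENNReal.ofReal (2 / ρ)) * (L * B) by ring, hone, one_mul]
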